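/- arXiv:2307.11597 — 2 statements merged into one kernel-verified Lean document; each statement's English description precedes it below -/
import Mathlib

section
/- Let μ be a finite Borel measure on ℝ (playing the role of the spectral measure), and let a ∈ 𝒮(ℝ) with â supported in (-1,1). Then for ε > 0 and λ ∈ ℝ, ∫ a(ε⁻¹(√s - λ)) dμ(s) over s ≥ 0 can be written as (ε/π)∫_{-∞}^{∞} â(εt) e^{-itλ} (∫ cos(t√s) dμ(s)) dt − ∫ a(ε⁻¹(−√s − λ)) dμ(s). -/
open MeasureTheory FourierTransform

namespace SmoothedAux

lemma norm_exp_I_mul (x c : ℝ) : ‖Complex.exp (Complex.I * x * c)‖ = 1 := by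
  rw [Complex.norm_exp]
  simp [Complex.mul_re]

lemma norm_exp_neg_I_mul (x c : ℝ) : ‖Complex.exp (-(Complex.I * x * c))‖ = 1 := by
  rw [Complex.norm_exp]
  simp [Complex.mul_re]

lemma fa_eq (a : SchwartzMap ℝ ℂ) (fa : ℝ → ℂ)
    (hfa : ∀ t : ℝ, fa t = ∫ τ : ℝ, Complex.exp (-(Complex.I * t * τ)) * a τ) (t : ℝ) :
    fa t = 𝓕 (⇑a : ℝ → ℂ) (t / (2 * Real.pi)) := by
  rw [hfa, Real.fourier_real_eq_integral_exp_smul]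
  congr 1
  ext v
  rw [smul_eq_mul]
  congr 1
  congr 1
  push_cast
  have : (Real.pi : ℂ) ≠ 0 := by exact_mod_cast Real.pi_ne_zero
  field_simp

lemma fa_cont (a : SchwartzMap ℝ ℂ) (fa : ℝ → ℂ)
    (hfa : ∀ t : ℝ, fa t = ∫ τ : ℝ, Complex.exp (-(Complex.I * t * τ)) * a τ) :
    Continuous fa := by
  have h : fa = fun t => 𝓕 (⇑a : ℝ → ℂ) (t / (2 * Real.pi)) :=
    funext (fa_eq a fa hfa)
  rw [h]
  have hc : Continuous (𝓕 (⇑a : ℝ → ℂ)) := by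
    rw [← SchwartzMap.fourier_coe]
    exact (𝓕 a).continuous
  exact hc.comp (continuous_id.div_const _)

lemma fa_integrable (a : SchwartzMap ℝ ℂ) (fa : ℝ → ℂ)
    (hfa : ∀ t : ℝ, fa t = ∫ τ : ℝ, Complex.exp (-(Complex.I * t * τ)) * a τ)
    (hsupp : Function.support fa ⊆ Set.Ioo (-1 : ℝ) 1) :
    Integrable fa := by
  have hcs : HasCompactSupport fa := by
    apply HasCompactSupport.intro (isCompact_Icc (a := (-1:ℝ)) (b := 1))
    intro x hx
    by_contra h
    exact hx (Set.Ioo_subset_Icc_self (hsupp h))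
  exact (fa_cont a fa hfa).integrable_of_hasCompactSupport hcs

lemma key_integral (a : SchwartzMap ℝ ℂ) (fa : ℝ → ℂ)
    (hfa : ∀ t : ℝ, fa t = ∫ τ : ℝ, Complex.exp (-(Complex.I * t * τ)) * a τ) (τ : ℝ) :
    ∫ t : ℝ, Complex.exp (Complex.I * t * τ) * fa t = (2 * Real.pi : ℝ) • a τ := by
  have hπ : (0:ℝ) < 2 * Real.pi := by positivity
  have h1 : ∀ t : ℝ, Complex.exp (Complex.I * t * τ) * fa t
      = (fun w : ℝ => Complex.exp (Complex.I * (2 * Real.pi * w) * τ)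
          * 𝓕 (⇑a : ℝ → ℂ) w) (t / (2 * Real.pi)) := by
    intro t
    rw [fa_eq a fa hfa]
    simp only []
    congr 2
    push_cast
    have : (Real.pi : ℂ) ≠ 0 := by exact_mod_cast Real.pi_ne_zero
    field_simp
  calc ∫ t : ℝ, Complex.exp (Complex.I * t * τ) * fa t
      = ∫ t : ℝ, (fun w : ℝ => Complex.exp (Complex.I * (2 * Real.pi * w) * τ)
          * 𝓕 (⇑a : ℝ → ℂ) w) (t / (2 * Real.pi)) := by
        simp_rw [h1]
    _ = |2 * Real.pi| • ∫ w : ℝ, Complex.exp (Complex.I * (2 * Real.pi * w) * τ)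
          * 𝓕 (⇑a : ℝ → ℂ) w := by
        exact MeasureTheory.Measure.integral_comp_div
          (fun w : ℝ => Complex.exp (Complex.I * (2 * Real.pi * w) * τ)
            * 𝓕 (⇑a : ℝ → ℂ) w) (2 * Real.pi)
    _ = (2 * Real.pi : ℝ) • (𝓕⁻ (𝓕 (⇑a : ℝ → ℂ)) τ) := by
        rw [abs_of_pos hπ]
        congr 1
        rw [Real.fourierInv_eq_fourier_neg,
          Real.fourier_real_eq_integral_exp_smul]
        congr 1; ext w
        rw [smul_eq_mul]
        congr 2
        push_cast; ring
    _ = (2 * Real.pi : ℝ) • a τ := by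
        congr 1
        rw [← SchwartzMap.fourier_coe, ← SchwartzMap.fourierInv_coe, fourierInv_fourier_eq]

lemma pointwise_identity (a : SchwartzMap ℝ ℂ) (fa : ℝ → ℂ)
    (hfa : ∀ t : ℝ, fa t = ∫ τ : ℝ, Complex.exp (-(Complex.I * t * τ)) * a τ)
    (hsupp : Function.support fa ⊆ Set.Ioo (-1 : ℝ) 1)
    (ε : ℝ) (hε : 0 < ε) (lam r : ℝ) :
    ∫ t : ℝ, fa (ε * t) * Complex.exp (-(Complex.I * t * lam)) * Complex.cos (t * r)
      = (Real.pi / ε : ℝ) • (a (ε⁻¹ * (r - lam)) + a (ε⁻¹ * (-r - lam))) := by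
  have hfi := fa_integrable a fa hfa hsupp
  set τ₁ := ε⁻¹ * (r - lam) with hτ₁
  set τ₂ := ε⁻¹ * (-r - lam) with hτ₂
  set h₁ : ℝ → ℂ := fun t => Complex.exp (Complex.I * t * τ₁) * fa t with hh₁
  set h₂ : ℝ → ℂ := fun t => Complex.exp (Complex.I * t * τ₂) * fa t with hh₂
  have hint₁ : Integrable h₁ := by
    exact Integrable.bdd_mul hfi
      ((Complex.continuous_exp.comp (by fun_prop)).aestronglyMeasurable)
      (Filter.Eventually.of_forall fun x => le_of_eq (norm_exp_I_mul x τ₁))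
  have hint₂ : Integrable h₂ := by
    exact Integrable.bdd_mul hfi
      ((Complex.continuous_exp.comp (by fun_prop)).aestronglyMeasurable)
      (Filter.Eventually.of_forall fun x => le_of_eq (norm_exp_I_mul x τ₂))
  have hcv₁ : ∫ u : ℝ, h₁ (ε * u) = |ε⁻¹| • ∫ t : ℝ, h₁ t :=
    MeasureTheory.Measure.integral_comp_mul_left h₁ ε
  have hcv₂ : ∫ u : ℝ, h₂ (ε * u) = |ε⁻¹| • ∫ t : ℝ, h₂ t :=
    MeasureTheory.Measure.integral_comp_mul_left h₂ ε
  have hptwise : ∀ u : ℝ,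
      fa (ε * u) * Complex.exp (-(Complex.I * u * lam)) * Complex.cos (u * r)
        = (2 : ℂ)⁻¹ * (h₁ (ε * u) + h₂ (ε * u)) := by
    intro u
    have hc : Complex.cos ((u : ℂ) * r)
        = (Complex.exp (Complex.I * u * r) + Complex.exp (-(Complex.I * u * r))) / 2 := by
      have h2c := Complex.two_cos ((u : ℂ) * r)
      field_simp
      rw [mul_comm, h2c]
      ring_nf
    have e1 : (Complex.I * ↑(ε * u) * (τ₁ : ℂ)) = Complex.I * u * r + -(Complex.I * u * lam) := by
      rw [hτ₁]
      push_cast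
      have : (ε : ℂ) ≠ 0 := by exact_mod_cast hε.ne'
      field_simp
      ring
    have e2 : (Complex.I * ↑(ε * u) * (τ₂ : ℂ)) = -(Complex.I * u * r) + -(Complex.I * u * lam) := by
      rw [hτ₂]
      push_cast
      have : (ε : ℂ) ≠ 0 := by exact_mod_cast hε.ne'
      field_simp
      ring
    rw [hh₁, hh₂]
    simp only []
    rw [e1, e2, Complex.exp_add, Complex.exp_add, hc]
    ring
  have hτint₁ := key_integral a fa hfa τ₁
  have hτint₂ := key_integral a fa hfa τ₂
  calc ∫ t : ℝ, fa (ε * t) * Complex.exp (-(Complex.I * t * lam)) * Complex.cos (t * r)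
      = ∫ u : ℝ, (2 : ℂ)⁻¹ * (h₁ (ε * u) + h₂ (ε * u)) := by
        exact integral_congr_ae (Filter.Eventually.of_forall hptwise)
    _ = (2 : ℂ)⁻¹ * ((∫ u : ℝ, h₁ (ε * u)) + ∫ u : ℝ, h₂ (ε * u)) := by
        rw [MeasureTheory.integral_const_mul, MeasureTheory.integral_add
          (hint₁.comp_mul_left' hε.ne') (hint₂.comp_mul_left' hε.ne')]
    _ = (2 : ℂ)⁻¹ * (|ε⁻¹| • ((2 * Real.pi : ℝ) • a τ₁) + |ε⁻¹| • ((2 * Real.pi : ℝ) • a τ₂)) := by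
        rw [hcv₁, hcv₂, hτint₁, hτint₂]
    _ = (Real.pi / ε : ℝ) • (a τ₁ + a τ₂) := by
        rw [abs_of_pos (inv_pos.mpr hε)]
        simp only [smul_smul, smul_add]
        rw [Complex.real_smul, Complex.real_smul, Complex.real_smul, Complex.real_smul]
        push_cast
        have hε' : (ε : ℂ) ≠ 0 := by exact_mod_cast hε.ne'
        field_simp

end SmoothedAux

open SmoothedAux

/-- Scalar version of the identity
`a(ε⁻¹(√(-Δ)-λ)) = (ε/π)∫ â(εt) e^{-itλ} cos(t√(-Δ)) dt − a(ε⁻¹(-√(-Δ)-λ))`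
against a finite spectral measure `μ`, where `â t = ∫ e^{-itτ} a(τ) dτ` is supported in
`(-1,1)`. -/
theorem smoothed_spectral_multiplier_identity
    (μ : Measure ℝ) [IsFiniteMeasure μ]
    (a : SchwartzMap ℝ ℂ) (fa : ℝ → ℂ)
    (hfa : ∀ t : ℝ, fa t = ∫ τ : ℝ, Complex.exp (-(Complex.I * t * τ)) * a τ)
    (hsupp : Function.support fa ⊆ Set.Ioo (-1 : ℝ) 1)
    (ε : ℝ) (hε : 0 < ε) (lam : ℝ) :
    ∫ s in Set.Ici (0 : ℝ), a (ε⁻¹ * (Real.sqrt s - lam)) ∂μ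
      = (ε / Real.pi : ℂ) *
          (∫ t : ℝ, fa (ε * t) * Complex.exp (-(Complex.I * t * lam)) *
            (∫ s in Set.Ici (0 : ℝ), Complex.cos (t * Real.sqrt s) ∂μ))
        - ∫ s in Set.Ici (0 : ℝ), a (ε⁻¹ * (-Real.sqrt s - lam)) ∂μ := by
  have hfc := fa_cont a fa hfa
  have hfi := fa_integrable a fa hfa hsupp
  set ν := μ.restrict (Set.Ici (0 : ℝ)) with hν
  -- boundedness of a
  obtain ⟨C, hC⟩ : ∃ C, ∀ x : ℝ, ‖a x‖ ≤ C := by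
    obtain ⟨C, hC⟩ := a.decay 0 0
    exact ⟨C, fun x => by simpa using hC.2 x⟩
  -- integrability of the two a-terms
  have hmeas_sqrt : Measurable (Real.sqrt) := Real.continuous_sqrt.measurable
  have hint_plus : Integrable (fun s : ℝ => a (ε⁻¹ * (Real.sqrt s - lam))) ν := by
    apply Integrable.mono' (integrable_const C)
    · exact ((a.continuous.comp (by fun_prop : Continuous (fun x : ℝ => ε⁻¹ * (x - lam)))).measurable.comp
        hmeas_sqrt).aestronglyMeasurable
    · exact Filter.Eventually.of_forall fun s => hC _
  have hint_minus : Integrable (fun s : ℝ => a (ε⁻¹ * (-Real.sqrt s - lam))) ν := by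
    apply Integrable.mono' (integrable_const C)
    · exact ((a.continuous.comp (by fun_prop : Continuous (fun x : ℝ => ε⁻¹ * (-x - lam)))).measurable.comp
        hmeas_sqrt).aestronglyMeasurable
    · exact Filter.Eventually.of_forall fun s => hC _
  -- the product-integrable function
  set F : ℝ → ℝ → ℂ := fun t s =>
    fa (ε * t) * Complex.exp (-(Complex.I * t * lam)) * Complex.cos (t * Real.sqrt s) with hF
  have hFmeas : AEStronglyMeasurable (Function.uncurry F) (volume.prod ν) := by
    have hcont : Continuous (fun q : ℝ × ℝ =>
        fa (ε * q.1) * Complex.exp (-(Complex.I * q.1 * lam)) * Complex.cos (q.1 * q.2)) := by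
      fun_prop
    have hm : Measurable (fun p : ℝ × ℝ => (p.1, Real.sqrt p.2)) :=
      measurable_fst.prodMk (hmeas_sqrt.comp measurable_snd)
    exact (hcont.measurable.comp hm).aestronglyMeasurable
  have hFint : Integrable (Function.uncurry F) (volume.prod ν) := by
    apply Integrable.mono' (g := fun p : ℝ × ℝ => ‖fa (ε * p.1)‖ * 1)
    · have h1 : Integrable (fun t : ℝ => ‖fa (ε * t)‖) volume :=
        (hfi.comp_mul_left' hε.ne').norm
      have h2 : Integrable (fun _ : ℝ => (1 : ℝ)) ν := integrable_const 1
      exact h1.mul_prod h2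
    · exact hFmeas
    · refine Filter.Eventually.of_forall fun p => ?_
      rw [Function.uncurry, hF]
      simp only []
      rw [norm_mul, norm_mul, mul_one]
      have hc1 : ‖Complex.exp (-(Complex.I * p.1 * lam))‖ = 1 := norm_exp_neg_I_mul _ _
      have hc2 : ‖Complex.cos ((p.1 : ℂ) * (Real.sqrt p.2 : ℂ))‖ ≤ 1 := by
        rw [show ((p.1 : ℂ) * (Real.sqrt p.2 : ℂ)) = ((p.1 * Real.sqrt p.2 : ℝ) : ℂ) by push_cast; ring,
          ← Complex.ofReal_cos, Complex.norm_real]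
        exact abs_le.mpr ⟨Real.neg_one_le_cos _, Real.cos_le_one _⟩
      calc ‖fa (ε * p.1)‖ * ‖Complex.exp (-(Complex.I * p.1 * lam))‖ * ‖Complex.cos ((p.1:ℂ) * (Real.sqrt p.2 : ℂ))‖
          ≤ ‖fa (ε * p.1)‖ * 1 * 1 := by
            apply mul_le_mul (by rw [hc1]) hc2 (norm_nonneg _) (by positivity)
        _ = ‖fa (ε * p.1)‖ := by ring
  -- main computation
  rw [eq_sub_iff_add_eq]
  have hswap :
      ∫ t : ℝ, fa (ε * t) * Complex.exp (-(Complex.I * t * lam)) *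
          (∫ s, Complex.cos (t * Real.sqrt s) ∂ν)
        = ∫ s, (∫ t : ℝ, F t s) ∂ν := by
    rw [← MeasureTheory.integral_integral_swap hFint]
    apply integral_congr_ae
    refine Filter.Eventually.of_forall fun t => ?_
    show fa (ε * t) * Complex.exp (-(Complex.I * t * lam)) *
        (∫ s, Complex.cos ((t : ℂ) * (Real.sqrt s : ℂ)) ∂ν) = ∫ y, F t y ∂ν
    simp only [hF]
    exact (MeasureTheory.integral_const_mul _ _).symm
  have hinner : ∀ s : ℝ, (∫ t : ℝ, F t s)
      = (Real.pi / ε : ℝ) • (a (ε⁻¹ * (Real.sqrt s - lam)) + a (ε⁻¹ * (-Real.sqrt s - lam))) :=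
    fun s => pointwise_identity a fa hfa hsupp ε hε lam (Real.sqrt s)
  rw [hswap]
  rw [integral_congr_ae (Filter.Eventually.of_forall hinner)]
  rw [integral_smul]
  rw [MeasureTheory.integral_add hint_plus hint_minus]
  rw [Complex.real_smul]
  push_cast
  have hε' : (ε : ℂ) ≠ 0 := by exact_mod_cast hε.ne'
  have hπ' : (Real.pi : ℂ) ≠ 0 := by exact_mod_cast Real.pi_ne_zero
  field_simp
end

section
/- Let m : [1,∞) → ℂ satisfy |d^j m/dr^j (r)| ≤ C_j r^(-j) for j = 0, 1 and let H ∈ 𝒮(ℝ). Then for λ ≥ 2 and any fixed ρ ∈ [1,2], |∫_1^∞ e^{irρ} r^((n-1)/2) H(λ - r) m(rρ) dr| ≤ C λ^((n-1)/2), with C independent of λ and ρ ∈ [1,2]. -/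
open MeasureTheory

/-- If `m` satisfies symbol bounds `|m(r)| ≤ C₀`, `|m'(r)| ≤ C₁/r` for `r ≥ 1` and
`H ∈ 𝒮(ℝ)`, then for `λ ≥ 2` and `ρ ∈ [1,2]`,
`|∫_1^∞ e^{irρ} r^((n-1)/2) H(λ-r) m(rρ) dr| ≤ C λ^((n-1)/2)`, uniformly in `ρ`. -/
theorem oscillatory_symbol_integral_bound
    (n : ℕ) (hn : 2 ≤ n) (m : ℝ → ℂ) (C₀ C₁ : ℝ)
    (hmdiff : ∀ r : ℝ, 1 ≤ r → DifferentiableAt ℝ m r)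
    (hm0 : ∀ r : ℝ, 1 ≤ r → ‖m r‖ ≤ C₀)
    (hm1 : ∀ r : ℝ, 1 ≤ r → ‖deriv m r‖ ≤ C₁ / r)
    (H : SchwartzMap ℝ ℝ) :
    ∃ C : ℝ, 0 < C ∧ ∀ lam : ℝ, 2 ≤ lam → ∀ ρ : ℝ, ρ ∈ Set.Icc (1 : ℝ) 2 →
      ‖∫ r in Set.Ioi (1 : ℝ),
          Complex.exp (Complex.I * r * ρ) * ((r ^ (((n : ℝ) - 1) / 2) : ℝ) : ℂ) *
            ((H (lam - r) : ℝ) : ℂ) * m (r * ρ)‖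
        ≤ C * lam ^ (((n : ℝ) - 1) / 2) := by
  have hn2 : (2:ℝ) ≤ (n:ℝ) := by exact_mod_cast hn
  set α : ℝ := ((n : ℝ) - 1) / 2 with hαdef
  have hα0 : 0 ≤ α := by unfold α; linarith
  have hαn : α ≤ (n:ℝ) := by unfold α; linarith
  have hC₀ : 0 ≤ C₀ := le_trans (norm_nonneg _) (hm0 1 le_rfl)
  -- integrability of the weight
  set F : ℝ → ℝ := fun x => (1 + |x|) ^ n * ‖H x‖ with hFdef
  have hFnonneg : ∀ x, 0 ≤ F x := fun x => by positivity
  have hFcont : Continuous F := by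
    exact ((continuous_const.add continuous_abs).pow n).mul H.continuous.norm
  have hFint : Integrable F := by
    have h1 : Integrable (fun x : ℝ => (2:ℝ)^n * (‖H x‖ + ‖x‖ ^ n * ‖H x‖)) :=
      ((H.integrable (μ := volume)).norm.add (H.integrable_pow_mul volume n)).const_mul _
    refine h1.mono' hFcont.aestronglyMeasurable (Filter.Eventually.of_forall fun x => ?_)
    have hb : (1 + |x|) ^ n ≤ 2^n * (1 + |x| ^ n) := by
      have h2 : (1 + |x|) ≤ 2 * max 1 |x| := by
        rcases le_total |x| 1 with h | h
        · simp [max_eq_left h]; linarith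
        · simp [max_eq_right h]; linarith [abs_nonneg x]
      calc (1 + |x|) ^ n ≤ (2 * max 1 |x|) ^ n :=
            pow_le_pow_left₀ (by positivity) h2 n
        _ = 2^n * (max 1 |x|)^n := mul_pow _ _ _
        _ ≤ 2^n * (1 + |x|^n) := by
            gcongr
            rcases le_total |x| 1 with h | h
            · simp [max_eq_left h]
            · simp [max_eq_right h]
    have : F x ≤ 2^n * (1 + |x|^n) * ‖H x‖ := by
      unfold F
      exact mul_le_mul_of_nonneg_right hb (norm_nonneg _)
    rw [Real.norm_eq_abs, abs_of_nonneg (hFnonneg x)]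
    calc F x ≤ 2^n * (1 + |x|^n) * ‖H x‖ := this
      _ = 2^n * (‖H x‖ + ‖x‖^n * ‖H x‖) := by simp [Real.norm_eq_abs]; ring
  set A : ℝ := ∫ x, F x with hAdef
  have hA0 : 0 ≤ A := integral_nonneg hFnonneg
  refine ⟨C₀ * A + 1, by positivity, fun lam hlam ρ hρ => ?_⟩
  have hlam1 : (1:ℝ) ≤ lam := by linarith
  have hlamα : (0:ℝ) < lam ^ α := Real.rpow_pos_of_pos (by linarith) α
  -- the dominating function
  set g : ℝ → ℝ := fun r => C₀ * lam ^ α * F (lam - r) with hgdef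
  have hgint : Integrable g := (hFint.comp_sub_left lam).const_mul _
  have hgnonneg : ∀ r, 0 ≤ g r := fun r => by
    have := hFnonneg (lam - r); positivity
  -- pointwise bound
  have hbound : ∀ r ∈ Set.Ioi (1:ℝ),
      ‖Complex.exp (Complex.I * r * ρ) * ((r ^ α : ℝ) : ℂ) *
          ((H (lam - r) : ℝ) : ℂ) * m (r * ρ)‖ ≤ g r := by
    intro r hr
    have hr1 : (1:ℝ) ≤ r := le_of_lt hr
    have hrρ : (1:ℝ) ≤ r * ρ := one_le_mul_of_one_le_of_one_le hr1 hρ.1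
    have hexp : ‖Complex.exp (Complex.I * r * ρ)‖ = 1 := by
      rw [Complex.norm_exp]
      simp
    have hrα : r ^ α ≤ lam ^ α * (1 + |lam - r|) ^ n := by
      have key : r ≤ lam * (1 + |lam - r|) := by
        rcases abs_cases (lam - r) with ⟨h1, h2⟩ | ⟨h1, h2⟩
        · nlinarith
        · nlinarith
      calc r ^ α ≤ (lam * (1 + |lam - r|)) ^ α :=
            Real.rpow_le_rpow (by linarith) key hα0
        _ = lam ^ α * (1 + |lam - r|) ^ α :=
            Real.mul_rpow (by linarith) (by positivity)
        _ ≤ lam ^ α * (1 + |lam - r|) ^ (n:ℝ) :=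
            mul_le_mul_of_nonneg_left
              (Real.rpow_le_rpow_of_exponent_le (by linarith [abs_nonneg (lam - r)]) hαn)
              hlamα.le
        _ = lam ^ α * (1 + |lam - r|) ^ n := by
            rw [Real.rpow_natCast]
    calc ‖Complex.exp (Complex.I * r * ρ) * ((r ^ α : ℝ) : ℂ) *
          ((H (lam - r) : ℝ) : ℂ) * m (r * ρ)‖
        = ‖Complex.exp (Complex.I * r * ρ)‖ * ‖((r ^ α : ℝ) : ℂ)‖ *
          ‖((H (lam - r) : ℝ) : ℂ)‖ * ‖m (r * ρ)‖ := by
          simp [norm_mul]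
      _ = 1 * |r ^ α| * ‖H (lam - r)‖ * ‖m (r * ρ)‖ := by
          rw [hexp, Complex.norm_real, Complex.norm_real, Real.norm_eq_abs]
      _ = r ^ α * ‖H (lam - r)‖ * ‖m (r * ρ)‖ := by
          rw [one_mul, abs_of_nonneg (Real.rpow_nonneg (by linarith) α)]
      _ ≤ (lam ^ α * (1 + |lam - r|) ^ n) * ‖H (lam - r)‖ * C₀ :=
          mul_le_mul (mul_le_mul_of_nonneg_right hrα (norm_nonneg _)) (hm0 _ hrρ)
            (norm_nonneg _) (by positivity)
      _ = g r := by unfold g F; ring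
  -- combine
  have step1 : ‖∫ r in Set.Ioi (1 : ℝ),
      Complex.exp (Complex.I * r * ρ) * ((r ^ α : ℝ) : ℂ) *
        ((H (lam - r) : ℝ) : ℂ) * m (r * ρ)‖ ≤ ∫ r in Set.Ioi (1:ℝ), g r := by
    refine norm_integral_le_of_norm_le hgint.restrict ?_
    exact (ae_restrict_iff' measurableSet_Ioi).mpr (Filter.Eventually.of_forall hbound)
  have step2 : ∫ r in Set.Ioi (1:ℝ), g r ≤ ∫ r, g r :=
    setIntegral_le_integral hgint (Filter.Eventually.of_forall hgnonneg)
  have step3 : ∫ r, g r = C₀ * lam ^ α * A := by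
    unfold g
    rw [integral_const_mul]
    congr 1
    exact integral_sub_left_eq_self F volume lam
  calc ‖∫ r in Set.Ioi (1 : ℝ),
      Complex.exp (Complex.I * r * ρ) * ((r ^ α : ℝ) : ℂ) *
        ((H (lam - r) : ℝ) : ℂ) * m (r * ρ)‖
      ≤ ∫ r in Set.Ioi (1:ℝ), g r := step1
    _ ≤ ∫ r, g r := step2
    _ = C₀ * lam ^ α * A := step3
    _ = (C₀ * A) * lam ^ α := by ring
    _ ≤ (C₀ * A + 1) * lam ^ α := by nlinarith
end
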